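/- Let G be a finite connected simple graph with edge weights w : E(G) → ℝ, and let T be a spanning tree of G. Then T is a minimum-weight spanning tree of G if and only if for every edge e = {u,v} of G not in T, the weight w(e) is greater than or equal to the weight of every edge on the unique path in T between u and v. -/

import Mathlib

/-- The total weight of (the edges of) a graph `T` on a finite vertex type,
with respect to an edge-weight function `w`. -/
noncomputable def treeWeight {V : Type*} [Fintype V] {R : Type*} [AddCommMonoid R]
    (T : SimpleGraph V) (w : Sym2 V → R) : R :=
  letI : Fintype T.edgeSet := Fintype.ofFinite _
  ∑ e ∈ T.edgeSet.toFinset, w e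

set_option linter.unusedSectionVars false

open SimpleGraph Finset

section AuxMST
variable {V : Type*} [Fintype V]

/-- Auxiliary finset of edges, independent of instances. -/
noncomputable def eFin (G : SimpleGraph V) : Finset (Sym2 V) :=
  (Set.toFinite G.edgeSet).toFinset

@[simp] lemma mem_eFin {G : SimpleGraph V} {e : Sym2 V} : e ∈ eFin G ↔ e ∈ G.edgeSet :=
  Set.Finite.mem_toFinset _

lemma eFin_eq_edgeFinset (G : SimpleGraph V) [Fintype G.edgeSet] :
    eFin G = G.edgeFinset := by
  ext e; simp [mem_edgeFinset]

lemma treeWeight_eq (T : SimpleGraph V) (w : Sym2 V → ℝ) :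
    treeWeight T w = ∑ e ∈ eFin T, w e := by
  unfold treeWeight
  apply Finset.sum_congr _ (fun _ _ => rfl)
  ext e
  simp [Set.mem_toFinset]

lemma card_eFin_tree {T : SimpleGraph V} (hT : T.IsTree) :
    (eFin T).card + 1 = Fintype.card V := by
  letI : Fintype T.edgeSet := Fintype.ofFinite _
  rw [eFin_eq_edgeFinset]
  exact hT.card_edgeFinset

lemma reach_of_adj_reach {G H : SimpleGraph V}
    (hGH : ∀ x y, G.Adj x y → H.Reachable x y) {x y : V} (h : G.Reachable x y) :
    H.Reachable x y := by
  obtain ⟨p⟩ := h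
  induction p with
  | nil => exact Reachable.refl _
  | cons h' q ih => exact (hGH _ _ h').trans ih

lemma conn_of_adj_reach {G H : SimpleGraph V}
    (hGH : ∀ x y, G.Adj x y → H.Reachable x y) (hG : G.Connected) : H.Connected := by
  rw [connected_iff] at hG ⊢
  exact ⟨fun x y => reach_of_adj_reach hGH (hG.1 x y), hG.2⟩

lemma delete_conn {G : SimpleGraph V} {a b : V} (hG : G.Connected)
    (hr : (G.deleteEdges {s(a, b)}).Reachable a b) :
    (G.deleteEdges {s(a, b)}).Connected := by
  apply conn_of_adj_reach ?_ hG
  intro x y hxy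
  by_cases hxy' : s(x, y) = s(a, b)
  · rw [Sym2.eq_iff] at hxy'
    rcases hxy' with ⟨rfl, rfl⟩ | ⟨rfl, rfl⟩
    · exact hr
    · exact hr.symm
  · exact Adj.reachable (SimpleGraph.deleteEdges_adj.mpr ⟨hxy, by simpa using hxy'⟩)

lemma nonbridge_reachable {G : SimpleGraph V} {a b : V} (hadj : G.Adj a b)
    (hnb : ¬ G.IsBridge s(a, b)) : (G.deleteEdges {s(a, b)}).Reachable a b := by
  rw [isBridge_iff] at hnb
  push_neg at hnb
  exact hnb

lemma conn_card_le : ∀ (n : ℕ) (G : SimpleGraph V), (eFin G).card = n → G.Connected →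
    Fintype.card V ≤ n + 1 := by
  classical
  intro n
  induction n using Nat.strong_induction_on with
  | _ n ih =>
    intro G hn hG
    by_cases hac : G.IsAcyclic
    · exact (card_eFin_tree ⟨hG, hac⟩ ▸ hn ▸ le_rfl)
    · obtain ⟨e, heE, hnb⟩ : ∃ e ∈ G.edgeSet, ¬ G.IsBridge e := by
        by_contra h
        push_neg at h
        exact hac (isAcyclic_iff_forall_edge_isBridge.mpr h)
      revert heE hnb
      induction e using Sym2.ind with
      | _ a b =>
        intro heE hnb
        have hadj : G.Adj a b := heE
        have hr := nonbridge_reachable hadj hnb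
        have hconn := delete_conn hG hr
        have hmem : s(a, b) ∈ eFin G := mem_eFin.mpr heE
        have hE : eFin (G.deleteEdges {s(a, b)}) = (eFin G).erase s(a, b) := by
          ext x
          simp [edgeSet_deleteEdges, and_comm]
        have hcard : (eFin (G.deleteEdges {s(a, b)})).card = n - 1 := by
          rw [hE, Finset.card_erase_of_mem hmem, hn]
        have hpos : 1 ≤ n := hn ▸ Finset.card_pos.mpr ⟨_, hmem⟩
        have := ih (n - 1) (by omega) _ hcard hconn
        omega

lemma isTree_of_conn_card {G : SimpleGraph V} (hc : G.Connected)
    (hcard : (eFin G).card + 1 = Fintype.card V) : G.IsTree := by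
  classical
  refine ⟨hc, ?_⟩
  by_contra hac
  obtain ⟨e, heE, hnb⟩ : ∃ e ∈ G.edgeSet, ¬ G.IsBridge e := by
    by_contra h
    push_neg at h
    exact hac (isAcyclic_iff_forall_edge_isBridge.mpr h)
  revert heE hnb
  induction e using Sym2.ind with
  | _ a b =>
    intro heE hnb
    have hadj : G.Adj a b := heE
    have hconn := delete_conn hc (nonbridge_reachable hadj hnb)
    have hmem : s(a, b) ∈ eFin G := mem_eFin.mpr heE
    have hE : eFin (G.deleteEdges {s(a, b)}) = (eFin G).erase s(a, b) := by
      ext x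
      simp [edgeSet_deleteEdges, and_comm]
    have hpos : 1 ≤ (eFin G).card := Finset.card_pos.mpr ⟨_, hmem⟩
    have := conn_card_le _ (G.deleteEdges {s(a, b)}) rfl hconn
    rw [hE, Finset.card_erase_of_mem hmem] at this
    omega

lemma exists_cross {H : SimpleGraph V} (P : V → Prop) :
    ∀ {u v : V} (q : H.Walk u v), P u → ¬ P v →
      ∃ a b, H.Adj a b ∧ s(a, b) ∈ q.edges ∧ P a ∧ ¬ P b := by
  intro u v q
  induction q with
  | nil => intro h1 h2; exact absurd h1 h2
  | @cons x y z h' q ih =>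
    intro h1 h2
    by_cases hm : P y
    · obtain ⟨a, b, h3, h4, h5, h6⟩ := ih hm h2
      exact ⟨a, b, h3, by simp [h4], h5, h6⟩
    · exact ⟨x, y, h', by simp, h1, hm⟩

lemma bridge_mem_edges {T : SimpleGraph V} {e : Sym2 V} {u₀ : V} :
    ∀ {a b : V} (r : T.Walk a b), (T.deleteEdges {e}).Reachable u₀ a →
      ¬ (T.deleteEdges {e}).Reachable u₀ b → e ∈ r.edges := by
  intro a b r
  induction r with
  | nil => intro h1 h2; exact absurd h1 h2
  | @cons x y z h' q ih =>
    intro h1 h2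
    by_cases hxy : s(x, y) = e
    · simp [hxy]
    · have hadj : (T.deleteEdges {e}).Adj x y :=
        SimpleGraph.deleteEdges_adj.mpr ⟨h', by simpa using hxy⟩
      have := ih (h1.trans hadj.reachable) h2
      simp [this]

lemma treeWeight_swap {T T'' : SimpleGraph V} {f e : Sym2 V} (hfT : f ∈ T.edgeSet)
    (heT : e ∉ T.edgeSet) (hE : T''.edgeSet = (T.edgeSet \ {f}) ∪ {e}) (w : Sym2 V → ℝ) :
    treeWeight T'' w = treeWeight T w - w f + w e := by
  classical
  have hfin : eFin T'' = insert e ((eFin T).erase f) := by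
    ext x
    simp only [mem_eFin, hE, Set.mem_union, Set.mem_diff, Set.mem_singleton_iff,
      Finset.mem_insert, Finset.mem_erase]
    tauto
  rw [treeWeight_eq, treeWeight_eq, hfin,
    Finset.sum_insert (by simp [heT]),
    Finset.sum_erase_eq_sub (mem_eFin.mpr hfT)]
  ring

lemma swap_isTree {T : SimpleGraph V} (hT : T.IsTree) {u v : V} (hne : u ≠ v)
    (he : ¬ T.Adj u v) {p : T.Walk u v} (hp : p.IsPath) {f : Sym2 V} (hf : f ∈ p.edges) :
    ∃ T'' : SimpleGraph V, T''.IsTree ∧ T''.edgeSet = (T.edgeSet \ {f}) ∪ {s(u, v)} := by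
  classical
  set C := T ⊔ SimpleGraph.edge u v with hC
  have hTC : T ≤ C := le_sup_left
  have hCuv : C.Adj u v := Or.inr ((edge_adj u v u v).mpr ⟨Or.inl ⟨rfl, rfl⟩, hne⟩)
  have hsub : ∀ e ∈ p.edges, e ∈ C.edgeSet :=
    fun e hep => edgeSet_mono hTC (p.edges_subset_edgeSet hep)
  have hp' : (p.transfer C hsub).IsPath := hp.transfer hsub
  have hsuv : s(u, v) ∉ (p.transfer C hsub).reverse.edges := by
    rw [Walk.edges_reverse, List.mem_reverse, Walk.edges_transfer]
    intro hmem
    exact he (p.edges_subset_edgeSet hmem)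
  have hc : (Walk.cons hCuv (p.transfer C hsub).reverse).IsCycle :=
    (Walk.cons_isCycle_iff _ _).mpr ⟨hp'.reverse, hsuv⟩
  have hfc : f ∈ (Walk.cons hCuv (p.transfer C hsub).reverse).edges := by
    rw [Walk.edges_cons]
    refine List.mem_cons_of_mem _ ?_
    rw [Walk.edges_reverse, List.mem_reverse, Walk.edges_transfer]
    exact hf
  have hfT : f ∈ T.edgeSet := p.edges_subset_edgeSet hf
  have hfne : f ≠ s(u, v) := fun h => he (show s(u,v) ∈ T.edgeSet from h ▸ hfT)
  have hCconn : C.Connected := hT.isConnected.mono hTC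
  have hconnC : (C.deleteEdges {f}).Connected := by
    clear hf hsuv hfne
    revert hfc hfT
    induction f using Sym2.ind with
    | _ a b =>
      intro hfc hfT
      have hCadj : C.Adj a b := Or.inl hfT
      have hnb : ¬ C.IsBridge s(a, b) := by
        rw [isBridge_iff_adj_and_forall_cycle_notMem]
        push_neg
        exact ⟨u, _, hc, hfc⟩
        exact hCadj
      exact delete_conn hCconn (nonbridge_reachable hCadj hnb)
  have hEq : C.deleteEdges {f} = T.deleteEdges {f} ⊔ SimpleGraph.edge u v := by
    ext x y
    simp only [SimpleGraph.deleteEdges_adj, hC, sup_adj, Set.mem_singleton_iff]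
    constructor
    · rintro ⟨h1 | h1, h2⟩
      · exact Or.inl ⟨h1, h2⟩
      · exact Or.inr h1
    · rintro (⟨h1, h2⟩ | h1)
      · exact ⟨Or.inl h1, h2⟩
      · refine ⟨Or.inr h1, fun hh => hfne ?_⟩
        rw [edge_adj] at h1
        rcases h1.1 with ⟨rfl, rfl⟩ | ⟨rfl, rfl⟩
        · exact hh.symm ▸ rfl
        · rw [← hh, Sym2.eq_swap]
  have hES : (T.deleteEdges {f} ⊔ SimpleGraph.edge u v).edgeSet
      = (T.edgeSet \ {f}) ∪ {s(u, v)} := by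
    rw [edgeSet_sup, edgeSet_deleteEdges, edge_edgeSet_of_ne hne]
  refine ⟨T.deleteEdges {f} ⊔ SimpleGraph.edge u v, ?_, hES⟩
  apply isTree_of_conn_card (hEq ▸ hconnC)
  have hfin : eFin (T.deleteEdges {f} ⊔ SimpleGraph.edge u v)
      = insert s(u, v) ((eFin T).erase f) := by
    ext x
    simp only [mem_eFin, hES, Set.mem_union, Set.mem_diff, Set.mem_singleton_iff,
      Finset.mem_insert, Finset.mem_erase]
    tauto
  have hnotmem : s(u, v) ∉ (eFin T).erase f := by
    simp only [Finset.mem_erase, mem_eFin, mem_edgeSet]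
    tauto
  rw [hfin, Finset.card_insert_of_notMem hnotmem, Finset.card_erase_of_mem (mem_eFin.mpr hfT)]
  have hpos : 1 ≤ (eFin T).card := Finset.card_pos.mpr ⟨f, mem_eFin.mpr hfT⟩
  have := card_eFin_tree hT
  omega

end AuxMST

/-- **Cycle-property characterization of minimum spanning trees.** Let `G` be a finite
connected simple graph with real edge weights `w`, and let `T` be a spanning tree of `G`
(a connected acyclic spanning subgraph). Then `T` is a minimum spanning tree of `G` if and
only if for every edge `{u, v}` of `G` not in `T`, the weight `w {u, v}` is at least the
weight of every edge on the unique path in `T` between `u` and `v`. -/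
theorem mst_iff_cycle_property {V : Type*} [Fintype V] (G : SimpleGraph V)
    (hG : G.Connected) (w : Sym2 V → ℝ)
    (T : SimpleGraph V) (hTG : T ≤ G) (hT : T.IsTree) :
    (∀ T' : SimpleGraph V, T' ≤ G → T'.IsTree → treeWeight T w ≤ treeWeight T' w) ↔
      (∀ u v : V, G.Adj u v → ¬ T.Adj u v →
        ∀ p : T.Walk u v, p.IsPath → ∀ e ∈ p.edges, w e ≤ w s(u, v)) := by
  classical
  constructor
  · intro hmin u v hGuv hTuv p hp f hf
    obtain ⟨T'', hT'', hE⟩ := swap_isTree hT hGuv.ne hTuv hp hf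
    have hT''G : T'' ≤ G := by
      rw [← edgeSet_subset_edgeSet, hE]
      rintro x (⟨hx, -⟩ | hx)
      · exact edgeSet_mono hTG hx
      · rw [Set.mem_singleton_iff] at hx
        rw [hx]
        exact hGuv
    have hw := treeWeight_swap (p.edges_subset_edgeSet hf)
      (fun hmem => hTuv hmem) hE w
    have := hmin T'' hT''G hT''
    rw [hw] at this
    linarith
  · intro hcyc
    have key : ∀ n : ℕ, ∀ T' : SimpleGraph V, T' ≤ G → T'.IsTree →
        ((eFin T') \ (eFin T)).card = n → treeWeight T w ≤ treeWeight T' w := by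
      intro n
      induction n using Nat.strong_induction_on with
      | _ n ih =>
        intro T' hT'G hT' hn
        have hcards : (eFin T').card = (eFin T).card := by
          have h1 := card_eFin_tree hT
          have h2 := card_eFin_tree hT'
          omega
        by_cases h0 : eFin T' \ eFin T = ∅
        · have hsub : eFin T' ⊆ eFin T := Finset.sdiff_eq_empty_iff_subset.mp h0
          have heq : eFin T' = eFin T := Finset.eq_of_subset_of_card_le hsub hcards.ge
          have hTT : T = T' := by
            rw [← edgeSet_inj]
            ext x
            rw [← mem_eFin, ← mem_eFin, heq]
          rw [hTT]
        · have hne' : (eFin T \ eFin T').Nonempty := by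
            rw [← Finset.card_pos, Finset.card_sdiff_comm hcards.symm, Finset.card_pos]
            exact Finset.nonempty_iff_ne_empty.mpr h0
          obtain ⟨e, hmemT⟩ := hne'
          obtain ⟨heT, heT'⟩ := Finset.mem_sdiff.mp hmemT
          clear hmemT
          revert heT heT'
          induction e using Sym2.ind with
          | _ u₀ v₀ =>
            intro heT heT'
            have hadj : T.Adj u₀ v₀ := mem_eFin.mp heT
            have hbr : ¬ (T.deleteEdges {s(u₀, v₀)}).Reachable u₀ v₀ := by
              have hB := isAcyclic_iff_forall_adj_isBridge.mp hT.IsAcyclic hadj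
              rw [isBridge_iff] at hB
              exact hB
            obtain ⟨q, hq⟩ : ∃ q : T'.Walk u₀ v₀, q.IsPath := by
              obtain ⟨r⟩ := hT'.isConnected.preconnected u₀ v₀
              exact ⟨r.toPath.1, r.toPath.2⟩
            obtain ⟨a, b, hab, hfq, hPa, hPb⟩ :=
              exists_cross (fun x => (T.deleteEdges {s(u₀, v₀)}).Reachable u₀ x) q
                (Reachable.refl _) hbr
            have hfT' : s(a, b) ∈ T'.edgeSet := hab
            have hfnT : s(a, b) ∉ T.edgeSet := by
              intro hmem
              by_cases hcase : s(a, b) = s(u₀, v₀)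
              · exact heT' (mem_eFin.mpr (hcase ▸ hfT'))
              · have hd : (T.deleteEdges {s(u₀, v₀)}).Adj a b :=
                  SimpleGraph.deleteEdges_adj.mpr ⟨hmem, by simpa using hcase⟩
                exact hPb (hPa.trans hd.reachable)
            have hGab : G.Adj a b := hT'G hab
            have hnTab : ¬ T.Adj a b := fun h => hfnT h
            obtain ⟨r, hr⟩ : ∃ r : T.Walk a b, r.IsPath := by
              obtain ⟨r⟩ := hT.isConnected.preconnected a b
              exact ⟨r.toPath.1, r.toPath.2⟩
            have hwle : w s(u₀, v₀) ≤ w s(a, b) := by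
              apply hcyc a b hGab hnTab r hr
              exact bridge_mem_edges r hPa hPb
            have hneT'uv : ¬ T'.Adj u₀ v₀ := fun h => heT' (mem_eFin.mpr h)
            obtain ⟨T'', hT'', hE⟩ := swap_isTree hT' hadj.ne hneT'uv hq hfq
            have hT''G : T'' ≤ G := by
              rw [← edgeSet_subset_edgeSet, hE]
              rintro x (⟨hx, -⟩ | hx)
              · exact edgeSet_mono hT'G hx
              · rw [Set.mem_singleton_iff] at hx
                rw [hx]
                exact hTG hadj
            have hw := treeWeight_swap hfT' (fun h => heT' (mem_eFin.mpr h)) hE w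
            have hmeasure : eFin T'' \ eFin T = (eFin T' \ eFin T).erase s(a, b) := by
              ext x
              simp only [Finset.mem_sdiff, Finset.mem_erase, mem_eFin, hE, Set.mem_union,
                Set.mem_diff, Set.mem_singleton_iff]
              constructor
              · rintro ⟨⟨hx, hxf⟩ | hx, hxT⟩
                · exact ⟨hxf, hx, hxT⟩
                · exact absurd (hx ▸ mem_eFin.mp heT) hxT
              · rintro ⟨hxf, hx, hxT⟩
                exact ⟨Or.inl ⟨hx, hxf⟩, hxT⟩
            have hfmem : s(a, b) ∈ eFin T' \ eFin T :=
              Finset.mem_sdiff.mpr ⟨mem_eFin.mpr hfT', fun h => hfnT (mem_eFin.mp h)⟩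
            have hnpos : 1 ≤ n := hn ▸ Finset.card_pos.mpr ⟨_, hfmem⟩
            have hcard'' : (eFin T'' \ eFin T).card = n - 1 := by
              rw [hmeasure, Finset.card_erase_of_mem hfmem, hn]
            have hle2 := ih (n - 1) (by omega) T'' hT''G hT'' hcard''
            rw [hw] at hle2
            linarith
    intro T' h1 h2
    exact key _ T' h1 h2 rfl
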